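/- Let π = (π_1, ..., π_ℓ) be a partition with ℓ parts. The number of permutations (linear orderings) of the multiset consisting of, for each i, 2π_i + 1 distinguishable symbols of kind i, such that for each i the symbols of kind i appear in comb-like order, equals (2|π| + ℓ)! / ∏_{i=1}^{ℓ} (2π_i + 1)!!, where |π| = π_1 + ... + π_ℓ. -/

import Mathlib

open Finset

/-- The odd double factorial `(2k+1)!! = 1·3·5···(2k+1)`. -/
def oddDoubleFactorial (k : ℕ) : ℕ := ∏ j ∈ Finset.range (k + 1), (2 * j + 1)

/-- An arrangement of all the symbols, i.e. a bijection from the set of symbols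
(with `2 * π i + 1` symbols of kind `i`) to the set of positions,
has the symbols of kind `i` in comb-like order if the positions of
`i_1, i_3, …, i_{2π_i+1}` increase and the position of `i_{2j}` precedes that of
`i_{2j+1}` for each `j` (0-based indexing is used). -/
def kindsCombLike {ℓ : ℕ} (π : Fin ℓ → ℕ)
    (f : (Σ i : Fin ℓ, Fin (2 * π i + 1)) ≃ Fin (∑ i, (2 * π i + 1))) : Prop :=
  ∀ i : Fin ℓ,
    (∀ j : Fin (π i), f ⟨i, ⟨2 * j.1, by have := j.2; omega⟩⟩ <
        f ⟨i, ⟨2 * j.1 + 2, by have := j.2; omega⟩⟩) ∧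
    (∀ j : Fin (π i), f ⟨i, ⟨2 * j.1 + 1, by have := j.2; omega⟩⟩ <
        f ⟨i, ⟨2 * j.1 + 2, by have := j.2; omega⟩⟩)

instance {ℓ : ℕ} (π : Fin ℓ → ℕ) : DecidablePred (kindsCombLike π) := fun _ => by
  unfold kindsCombLike; infer_instance






def combP (k : ℕ) (τ : Equiv.Perm (Fin (2 * k + 1))) : Prop :=
  ∀ j : Fin k,
    τ ⟨2 * j.1, by have := j.2; omega⟩ < τ ⟨2 * j.1 + 2, by have := j.2; omega⟩ ∧
    τ ⟨2 * j.1 + 1, by have := j.2; omega⟩ < τ ⟨2 * j.1 + 2, by have := j.2; omega⟩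

instance (k : ℕ) : DecidablePred (combP k) := fun _ => by
  unfold combP; infer_instance

lemma combP_lt_even {k : ℕ} {τ : Equiv.Perm (Fin (2 * k + 1))} (h : combP k τ)
    (j : ℕ) (hj : j ≤ k) (x : Fin (2 * k + 1)) (hx : x.1 < 2 * j) :
    τ x < τ ⟨2 * j, by omega⟩ := by
  induction j with
  | zero => omega
  | succ m ih =>
    have hm : m ≤ k := by omega
    have h1 := h ⟨m, by omega⟩
    rcases lt_trichotomy x.1 (2 * m) with hc | hc | hc
    · exact lt_trans (ih hm hc) h1.1
    · have hxe : x = ⟨2 * m, by omega⟩ := Fin.ext hc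
      rw [hxe]; exact h1.1
    · have hxv : x.1 = 2 * m + 1 := by omega
      have hxe : x = ⟨2 * m + 1, by omega⟩ := Fin.ext hxv
      rw [hxe]; exact h1.2

lemma combP_top {k : ℕ} {τ : Equiv.Perm (Fin (2 * k + 1))} (h : combP k τ) :
    τ ⟨2 * k, by omega⟩ = Fin.last (2 * k) := by
  by_contra hne
  set y := τ.symm (Fin.last (2 * k)) with hy
  have hyv : τ y = Fin.last (2 * k) := τ.apply_symm_apply _
  have hyne : y ≠ ⟨2 * k, by omega⟩ := by
    intro he; rw [he] at hyv; exact hne hyv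
  have hylt : y.1 < 2 * k := by
    have := y.2; rcases Nat.lt_or_ge y.1 (2*k) with h'|h'
    · exact h'
    · exact absurd (Fin.ext (by omega : y.1 = 2*k)) hyne
  have := combP_lt_even h k le_rfl y hylt
  rw [hyv] at this
  exact absurd (Fin.le_last _) (not_le_of_gt this)

section Ext
variable {k : ℕ}

def combExtFun (a : Fin (2 * k + 2)) (τ : Equiv.Perm (Fin (2 * k + 1)))
    (x : Fin (2 * (k + 1) + 1)) : Fin (2 * (k + 1) + 1) :=
  if _ : x.1 = 2 * k + 2 then Fin.last (2 * k + 2)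
  else if _ : x.1 = 2 * k + 1 then a.castSucc
  else (a.succAbove (τ ⟨x.1, by have := x.2; omega⟩)).castSucc

lemma combExtFun_injective (a : Fin (2 * k + 2)) (τ : Equiv.Perm (Fin (2 * k + 1))) :
    Function.Injective (combExtFun a τ) := by
  intro x y h
  unfold combExtFun at h
  split_ifs at h with h1 h2 h3 h4 h5 h6 h7 h8 h9
  · exact Fin.ext (by omega)
  · exact absurd h.symm (Fin.castSucc_lt_last a).ne
  · exact absurd h.symm (Fin.castSucc_lt_last _).ne
  · exact absurd h (Fin.castSucc_lt_last a).ne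
  · exact Fin.ext (by omega)
  · exact absurd (Fin.castSucc_injective _ h.symm) (Fin.succAbove_ne a _)
  · exact absurd h (Fin.castSucc_lt_last _).ne
  · exact absurd (Fin.castSucc_injective _ h) (Fin.succAbove_ne a _)
  · have h' := Fin.succAbove_right_injective (Fin.castSucc_injective _ h)
    have := τ.injective h'
    exact Fin.ext (by simpa [Fin.ext_iff] using this)

noncomputable def combExt (a : Fin (2 * k + 2)) (τ : Equiv.Perm (Fin (2 * k + 1))) :
    Equiv.Perm (Fin (2 * (k + 1) + 1)) :=
  Equiv.ofBijective _ (Finite.injective_iff_bijective.1 (combExtFun_injective a τ))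

lemma combExt_apply_top (a : Fin (2 * k + 2)) (τ : Equiv.Perm (Fin (2 * k + 1)))
    (h : 2 * k + 2 < 2 * (k + 1) + 1) :
    combExt a τ ⟨2 * k + 2, h⟩ = Fin.last (2 * k + 2) := by
  simp [combExt, combExtFun]

lemma combExt_apply_snd (a : Fin (2 * k + 2)) (τ : Equiv.Perm (Fin (2 * k + 1)))
    (h : 2 * k + 1 < 2 * (k + 1) + 1) :
    combExt a τ ⟨2 * k + 1, h⟩ = a.castSucc := by
  simp [combExt, combExtFun]

lemma combExt_apply_lt (a : Fin (2 * k + 2)) (τ : Equiv.Perm (Fin (2 * k + 1)))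
    (m : ℕ) (hm : m < 2 * k + 1) (h : m < 2 * (k + 1) + 1) :
    combExt a τ ⟨m, h⟩ = (a.succAbove (τ ⟨m, hm⟩)).castSucc := by
  simp only [combExt, Equiv.ofBijective_apply, combExtFun]
  rw [dif_neg (by omega), dif_neg (by omega)]


end Ext

section ExtComb
variable {k : ℕ}

lemma combExt_lt_iff (a : Fin (2 * k + 2)) (τ : Equiv.Perm (Fin (2 * k + 1)))
    (u v : Fin (2 * k + 1)) (hu : u.1 < 2 * (k + 1) + 1) (hv : v.1 < 2 * (k + 1) + 1) :
    combExt a τ ⟨u.1, hu⟩ < combExt a τ ⟨v.1, hv⟩ ↔ τ u < τ v := by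
  rw [combExt_apply_lt a τ u.1 u.2 hu, combExt_apply_lt a τ v.1 v.2 hv]
  rw [Fin.castSucc_lt_castSucc_iff, Fin.succAbove_lt_succAbove_iff]

lemma combP_combExt (a : Fin (2 * k + 2)) (τ : Equiv.Perm (Fin (2 * k + 1)))
    (hτ : combP k τ) : combP (k + 1) (combExt a τ) := by
  rintro ⟨jv, hjv⟩
  rcases Nat.lt_or_ge jv k with hlt | hge
  · have h1 := hτ ⟨jv, hlt⟩
    constructor
    · rw [combExt_lt_iff a τ ⟨2 * jv, by omega⟩ ⟨2 * jv + 2, by omega⟩ (by omega) (by omega)]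
      exact h1.1
    · rw [combExt_lt_iff a τ ⟨2 * jv + 1, by omega⟩ ⟨2 * jv + 2, by omega⟩ (by omega) (by omega)]
      exact h1.2
  · have hjk : jv = k := by omega
    subst hjk
    have htop : combExt a τ ⟨2 * jv + 2, by omega⟩ = Fin.last (2 * jv + 2) :=
      combExt_apply_top a τ (by omega)
    constructor
    · rw [htop, combExt_apply_lt a τ (2 * jv) (by omega) (by omega)]
      exact Fin.castSucc_lt_last _
    · rw [htop, combExt_apply_snd a τ (by omega)]
      exact Fin.castSucc_lt_last _

end ExtComb

lemma card_comb_succ (k : ℕ) :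
    Fintype.card {τ' : Equiv.Perm (Fin (2 * (k + 1) + 1)) // combP (k + 1) τ'} =
      (2 * k + 2) * Fintype.card {τ : Equiv.Perm (Fin (2 * k + 1)) // combP k τ} := by
  have hbij : Function.Bijective
      (fun p : Fin (2 * k + 2) × {τ : Equiv.Perm (Fin (2 * k + 1)) // combP k τ} =>
        (⟨combExt p.1 p.2.1, combP_combExt p.1 p.2.1 p.2.2⟩ :
          {τ' : Equiv.Perm (Fin (2 * (k + 1) + 1)) // combP (k + 1) τ'})) := by
    constructor
    · rintro ⟨a, τ, hτ⟩ ⟨a', τ', hτ'⟩ h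
      simp only [Subtype.mk.injEq] at h
      have ha : a = a' := by
        have h2 := congrArg (fun (e : Equiv.Perm (Fin (2 * (k + 1) + 1))) =>
          e ⟨2 * k + 1, by omega⟩) h
        rw [combExt_apply_snd a τ (by omega), combExt_apply_snd a' τ' (by omega)] at h2
        exact Fin.castSucc_injective _ h2
      subst ha
      have hτeq : τ = τ' := by
        ext x
        have h2 := congrArg (fun (e : Equiv.Perm (Fin (2 * (k + 1) + 1))) =>
          e ⟨x.1, by have := x.2; omega⟩) h
        rw [combExt_apply_lt a τ x.1 x.2 (by have := x.2; omega),
            combExt_apply_lt a τ' x.1 x.2 (by have := x.2; omega)] at h2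
        have h3 := Fin.succAbove_right_injective (Fin.castSucc_injective _ h2)
        exact congrArg Fin.val h3
      subst hτeq
      rfl
    · rintro ⟨σ, hσ⟩
      have htop : σ ⟨2 * (k + 1), by omega⟩ = Fin.last (2 * (k + 1)) := combP_top hσ
      have hlt : ∀ x : Fin (2 * (k + 1) + 1), x.1 < 2 * k + 2 →
          σ x ≠ Fin.last (2 * k + 2) := by
        intro x hx
        have h2 := combP_lt_even hσ (k + 1) le_rfl x (by omega)
        rw [htop] at h2
        exact h2.ne
      have h21 : (2 * k + 1 : ℕ) < 2 * (k + 1) + 1 := by omega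
      have hlast1 : σ ⟨2 * k + 1, h21⟩ ≠ Fin.last (2 * k + 2) :=
        hlt ⟨2 * k + 1, h21⟩ (by show 2 * k + 1 < 2 * k + 2; omega)
      set a : Fin (2 * k + 2) := (σ ⟨2 * k + 1, h21⟩).castPred hlast1 with ha
      have hane : ∀ x : Fin (2 * k + 1),
          ((σ ⟨x.1, by have := x.2; omega⟩).castPred
            (hlt ⟨x.1, by have := x.2; omega⟩ (by show x.1 < 2 * k + 2; have := x.2; omega))) ≠ a := by
        intro x hx
        rw [ha, Fin.castPred_inj] at hx
        have h3 := congrArg Fin.val (σ.injective hx)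
        simp only at h3
        have := x.2
        omega
      set τ0 : Fin (2 * k + 1) → Fin (2 * k + 1) := fun x =>
        (finSuccAboveEquiv a).symm ⟨_, hane x⟩ with hτ0
      have hτ0key : ∀ x : Fin (2 * k + 1),
          (a.succAbove (τ0 x)).castSucc = σ ⟨x.1, by have := x.2; omega⟩ := by
        intro x
        have h2 := (finSuccAboveEquiv a).apply_symm_apply ⟨_, hane x⟩
        rw [show (finSuccAboveEquiv a) (τ0 x) = ⟨a.succAbove (τ0 x), a.succAbove_ne _⟩ from
          finSuccAboveEquiv_apply a (τ0 x)] at h2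
        have h3 := congrArg Subtype.val h2
        simp only at h3
        rw [h3, Fin.castSucc_castPred]
      have hτ0inj : Function.Injective τ0 := by
        intro x y hxy
        have h2 : (a.succAbove (τ0 x)).castSucc = (a.succAbove (τ0 y)).castSucc := by rw [hxy]
        rw [hτ0key x, hτ0key y] at h2
        have h3 := congrArg Fin.val (σ.injective h2)
        simp only at h3
        exact Fin.ext h3
      set τE : Equiv.Perm (Fin (2 * k + 1)) :=
        Equiv.ofBijective τ0 (Finite.injective_iff_bijective.1 hτ0inj) with hτE
      have hτEa : ∀ x : Fin (2 * k + 1), τE x = τ0 x := fun _ => rfl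
      have hmono : ∀ u v : Fin (2 * k + 1),
          τE u < τE v ↔ σ ⟨u.1, by have := u.2; omega⟩ < σ ⟨v.1, by have := v.2; omega⟩ := by
        intro u v
        rw [hτEa, hτEa, ← Fin.succAbove_lt_succAbove_iff (p := a),
          ← Fin.castSucc_lt_castSucc_iff, hτ0key u, hτ0key v]
      have hcomb : combP k τE := by
        intro j
        have hj := hσ ⟨j.1, by have := j.2; omega⟩
        constructor
        · exact (hmono ⟨2 * j.1, by have := j.2; omega⟩ ⟨2 * j.1 + 2, by have := j.2; omega⟩).2 hj.1
        · exact (hmono ⟨2 * j.1 + 1, by have := j.2; omega⟩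
            ⟨2 * j.1 + 2, by have := j.2; omega⟩).2 hj.2
      refine ⟨(a, ⟨τE, hcomb⟩), ?_⟩
      apply Subtype.ext
      simp only
      apply Equiv.ext
      rintro ⟨xv, hxv⟩
      rcases Nat.lt_trichotomy xv (2 * k + 1) with hc | hc | hc
      · rw [combExt_apply_lt a τE xv hc hxv]
        exact hτ0key ⟨xv, hc⟩
      · subst hc
        rw [combExt_apply_snd a τE hxv, ha, Fin.castSucc_castPred]
      · have hx2 : xv = 2 * k + 2 := by omega
        subst hx2
        rw [combExt_apply_top a τE hxv]
        exact htop.symm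
  rw [← Fintype.card_of_bijective hbij, Fintype.card_prod, Fintype.card_fin]

lemma comb_count (k : ℕ) :
    Fintype.card {τ : Equiv.Perm (Fin (2 * k + 1)) // combP k τ} * oddDoubleFactorial k =
      Nat.factorial (2 * k + 1) := by
  induction k with
  | zero =>
    have htriv : ∀ τ : Equiv.Perm (Fin (2 * 0 + 1)), combP 0 τ := fun τ j => j.elim0
    have h1 : Fintype.card {τ : Equiv.Perm (Fin (2 * 0 + 1)) // combP 0 τ} =
        Fintype.card (Equiv.Perm (Fin (2 * 0 + 1))) :=
      Fintype.card_congr (Equiv.subtypeUnivEquiv htriv)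
    rw [h1]
    simp [oddDoubleFactorial]
  | succ k ih =>
    have h1 : oddDoubleFactorial (k + 1) = oddDoubleFactorial k * (2 * (k + 1) + 1) := by
      rw [oddDoubleFactorial, oddDoubleFactorial, Finset.prod_range_succ]
    have h2 : Nat.factorial (2 * (k + 1) + 1) =
        (2 * (k + 1) + 1) * ((2 * k + 2) * Nat.factorial (2 * k + 1)) := by
      have e1 : 2 * (k + 1) + 1 = (2 * k + 1) + 1 + 1 := by ring
      rw [e1, Nat.factorial_succ, Nat.factorial_succ]
    rw [card_comb_succ k, h1, h2, ← ih]
    ring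

section Main
variable {ℓ : ℕ} (π : Fin ℓ → ℕ)

def PKMono (m : (Σ i : Fin ℓ, Fin (2 * π i + 1)) ≃ Fin (∑ i, (2 * π i + 1))) : Prop :=
  ∀ (i : Fin ℓ) (a b : Fin (2 * π i + 1)), a < b → m ⟨i, a⟩ < m ⟨i, b⟩

instance : DecidablePred (PKMono π) := fun _ => by unfold PKMono; infer_instance

def bigMap
    (p : (∀ i, Equiv.Perm (Fin (2 * π i + 1))) ×
      {m : (Σ i : Fin ℓ, Fin (2 * π i + 1)) ≃ Fin (∑ i, (2 * π i + 1)) // PKMono π m}) :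
    (Σ i : Fin ℓ, Fin (2 * π i + 1)) ≃ Fin (∑ i, (2 * π i + 1)) :=
  (Equiv.sigmaCongrRight p.1).trans p.2.1

lemma bigMap_apply (p) (i : Fin ℓ) (j : Fin (2 * π i + 1)) :
    bigMap π p ⟨i, j⟩ = p.2.1 ⟨i, p.1 i j⟩ := rfl

lemma bigMap_injective : Function.Injective (bigMap π) := by
  rintro ⟨σ, ⟨m, hm⟩⟩ ⟨σ', ⟨m', hm'⟩⟩ h
  have happ : ∀ (i : Fin ℓ) (j : Fin (2 * π i + 1)),
      m ⟨i, σ i j⟩ = m' ⟨i, σ' i j⟩ := by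
    intro i j
    exact congrFun (congrArg (fun (e : _ ≃ _) => (e : _ → _)) h) ⟨i, j⟩
  have hmeq : ∀ (i : Fin ℓ) (j : Fin (2 * π i + 1)), m ⟨i, j⟩ = m' ⟨i, j⟩ := by
    intro i
    have hsm1 : StrictMono (fun j : Fin (2 * π i + 1) => m ⟨i, j⟩) :=
      fun a b hab => hm i a b hab
    have hsm2 : StrictMono (fun j : Fin (2 * π i + 1) => m' ⟨i, j⟩) :=
      fun a b hab => hm' i a b hab
    have hr : Set.range (fun j : Fin (2 * π i + 1) => m ⟨i, j⟩) =
        Set.range (fun j : Fin (2 * π i + 1) => m' ⟨i, j⟩) := by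
      ext v
      simp only [Set.mem_range]
      constructor
      · rintro ⟨j, rfl⟩
        refine ⟨σ' i ((σ i).symm j), ?_⟩
        rw [← happ i ((σ i).symm j), Equiv.apply_symm_apply]
      · rintro ⟨j, rfl⟩
        refine ⟨σ i ((σ' i).symm j), ?_⟩
        rw [happ i ((σ' i).symm j), Equiv.apply_symm_apply]
    have hwf : WellFoundedLT (Fin (2 * π i + 1)) := inferInstance
    exact fun j => congrFun ((hsm1.range_inj hsm2).1 hr) j
  have hmeq' : m = m' := by
    apply Equiv.ext
    rintro ⟨i, j⟩
    exact hmeq i j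
  subst hmeq'
  have hσ : σ = σ' := by
    funext i
    apply Equiv.ext
    intro j
    have h2 := happ i j
    have h3 := m.injective h2
    simpa using h3
  subst hσ
  rfl

lemma bigMap_surjective : Function.Surjective (bigMap π) := by
  intro f
  have hinj : ∀ i : Fin ℓ, Function.Injective (fun j : Fin (2 * π i + 1) => f ⟨i, j⟩) := by
    intro i a b hab
    have h1 := f.injective hab
    simpa using h1
  have hcard : ∀ i : Fin ℓ,
      (Finset.univ.image (fun j : Fin (2 * π i + 1) => f ⟨i, j⟩)).card = 2 * π i + 1 := by
    intro i
    rw [Finset.card_image_of_injective _ (hinj i), Finset.card_univ, Fintype.card_fin]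
  let inc : ∀ i : Fin ℓ,
      Fin (2 * π i + 1) ≃o (Finset.univ.image (fun j : Fin (2 * π i + 1) => f ⟨i, j⟩)) :=
    fun i => Finset.orderIsoOfFin _ (hcard i)
  let m0 : (Σ i : Fin ℓ, Fin (2 * π i + 1)) → Fin (∑ i, (2 * π i + 1)) :=
    fun x => (inc x.1 x.2 : Fin (∑ i, (2 * π i + 1)))
  have hm0inj : Function.Injective m0 := by
    rintro ⟨i, a⟩ ⟨i', b⟩ hab
    have h1 : (inc i a : Fin (∑ i, (2 * π i + 1))) ∈
        Finset.univ.image (fun j : Fin (2 * π i + 1) => f ⟨i, j⟩) := (inc i a).2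
    have h2 : (inc i a : Fin (∑ i, (2 * π i + 1))) ∈
        Finset.univ.image (fun j : Fin (2 * π i' + 1) => f ⟨i', j⟩) := by
      rw [show ((inc i a : Fin (∑ i, (2 * π i + 1)))) = (inc i' b : Fin (∑ i, (2 * π i + 1)))
        from hab]
      exact (inc i' b).2
    obtain ⟨j1, _, hj1⟩ := Finset.mem_image.1 h1
    obtain ⟨j2, _, hj2⟩ := Finset.mem_image.1 h2
    have hii : i = i' := by
      have := f.injective (hj1.trans hj2.symm)
      exact (Sigma.mk.inj_iff.1 this).1
    subst hii
    have hab' : (inc i a : Fin (∑ i, (2 * π i + 1))) = (inc i b) := hab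
    have := (inc i).injective (Subtype.ext hab')
    rw [this]
  have hcards : Fintype.card (Σ i : Fin ℓ, Fin (2 * π i + 1)) =
      Fintype.card (Fin (∑ i, (2 * π i + 1))) := by
    simp [Fintype.card_sigma]
  let m : (Σ i : Fin ℓ, Fin (2 * π i + 1)) ≃ Fin (∑ i, (2 * π i + 1)) :=
    Equiv.ofBijective m0 ((Fintype.bijective_iff_injective_and_card m0).2 ⟨hm0inj, hcards⟩)
  have hm : PKMono π m := by
    intro i a b hab
    have : (inc i a : Fin (∑ i, (2 * π i + 1))) < (inc i b : Fin (∑ i, (2 * π i + 1))) := by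
      exact_mod_cast (inc i).strictMono hab
    exact this
  have hmem : ∀ (i : Fin ℓ) (j : Fin (2 * π i + 1)),
      f ⟨i, j⟩ ∈ Finset.univ.image (fun j : Fin (2 * π i + 1) => f ⟨i, j⟩) :=
    fun i j => Finset.mem_image_of_mem _ (Finset.mem_univ j)
  let σ0 : ∀ i : Fin ℓ, Fin (2 * π i + 1) → Fin (2 * π i + 1) :=
    fun i j => (inc i).symm ⟨f ⟨i, j⟩, hmem i j⟩
  have hσ0inj : ∀ i, Function.Injective (σ0 i) := by
    intro i a b hab
    have h1 := congrArg (inc i) hab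
    rw [OrderIso.apply_symm_apply, OrderIso.apply_symm_apply] at h1
    have h2 := congrArg Subtype.val h1
    exact hinj i h2
  let σ : ∀ i : Fin ℓ, Equiv.Perm (Fin (2 * π i + 1)) :=
    fun i => Equiv.ofBijective (σ0 i) (Finite.injective_iff_bijective.1 (hσ0inj i))
  refine ⟨(σ, ⟨m, hm⟩), ?_⟩
  apply Equiv.ext
  rintro ⟨i, j⟩
  show m0 ⟨i, σ0 i j⟩ = f ⟨i, j⟩
  show (inc i ((inc i).symm ⟨f ⟨i, j⟩, hmem i j⟩) : Fin (∑ i, (2 * π i + 1))) = f ⟨i, j⟩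
  rw [OrderIso.apply_symm_apply]

lemma comb_bigMap (p) : kindsCombLike π (bigMap π p) ↔ ∀ i, combP (π i) (p.1 i) := by
  obtain ⟨σ, ⟨m, hm⟩⟩ := p
  have hlt : ∀ (i : Fin ℓ) (a b : Fin (2 * π i + 1)),
      (bigMap π (σ, ⟨m, hm⟩) ⟨i, a⟩ < bigMap π (σ, ⟨m, hm⟩) ⟨i, b⟩ ↔ σ i a < σ i b) := by
    intro i a b
    rw [bigMap_apply, bigMap_apply]
    have hsm : StrictMono (fun j : Fin (2 * π i + 1) => m ⟨i, j⟩) :=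
      fun u v huv => hm i u v huv
    exact hsm.lt_iff_lt
  unfold kindsCombLike combP
  apply forall_congr'
  intro i
  rw [forall_and]
  apply and_congr
  · apply forall_congr'
    intro j
    exact hlt i _ _
  · apply forall_congr'
    intro j
    exact hlt i _ _

theorem main_count :
    Fintype.card {f : (Σ i : Fin ℓ, Fin (2 * π i + 1)) ≃ Fin (∑ i, (2 * π i + 1)) //
        kindsCombLike π f} * ∏ i, oddDoubleFactorial (π i) =
      Nat.factorial (∑ i, (2 * π i + 1)) := by
  classical
  set M := Fintype.card {m : (Σ i : Fin ℓ, Fin (2 * π i + 1)) ≃ Fin (∑ i, (2 * π i + 1)) //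
    PKMono π m} with hM
  -- total count
  have hbij : Function.Bijective (bigMap π) := ⟨bigMap_injective π, bigMap_surjective π⟩
  have htotal : (∏ i, Nat.factorial (2 * π i + 1)) * M =
      Nat.factorial (∑ i, (2 * π i + 1)) := by
    have h1 := Fintype.card_of_bijective hbij
    rw [Fintype.card_prod, Fintype.card_pi] at h1
    have h2 : ∀ i : Fin ℓ, Fintype.card (Equiv.Perm (Fin (2 * π i + 1))) =
        Nat.factorial (2 * π i + 1) := by
      intro i
      rw [Fintype.card_perm, Fintype.card_fin]
    simp only [h2] at h1
    have hcards : Fintype.card (Σ i : Fin ℓ, Fin (2 * π i + 1)) = ∑ i, (2 * π i + 1) := by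
      simp [Fintype.card_sigma]
    have h3 : Fintype.card ((Σ i : Fin ℓ, Fin (2 * π i + 1)) ≃ Fin (∑ i, (2 * π i + 1))) =
        Nat.factorial (∑ i, (2 * π i + 1)) := by
      rw [Fintype.card_equiv (Fintype.equivFinOfCardEq hcards), hcards]
    rw [h3] at h1
    exact h1
  -- comb count
  have hΨbij : Function.Bijective
      (fun p : (∀ i, {τ : Equiv.Perm (Fin (2 * π i + 1)) // combP (π i) τ}) ×
          {m : (Σ i : Fin ℓ, Fin (2 * π i + 1)) ≃ Fin (∑ i, (2 * π i + 1)) // PKMono π m} =>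
        (⟨bigMap π (fun i => (p.1 i).1, p.2),
          (comb_bigMap π _).2 (fun i => (p.1 i).2)⟩ :
          {f : (Σ i : Fin ℓ, Fin (2 * π i + 1)) ≃ Fin (∑ i, (2 * π i + 1)) //
            kindsCombLike π f})) := by
    constructor
    · rintro ⟨τ, m⟩ ⟨τ', m'⟩ h
      simp only [Subtype.mk.injEq] at h
      have h2 := bigMap_injective π h
      have h3 : (fun i => (τ i).1) = fun i => (τ' i).1 := congrArg Prod.fst h2
      have h4 : m = m' := congrArg Prod.snd h2
      have h5 : τ = τ' := by
        funext i
        exact Subtype.ext (congrFun h3 i)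
      rw [h5, h4]
    · rintro ⟨f, hf⟩
      obtain ⟨⟨σ, m⟩, hfm⟩ := bigMap_surjective π f
      have hcomb : ∀ i, combP (π i) (σ i) := by
        rw [← hfm] at hf
        exact (comb_bigMap π _).1 hf
      refine ⟨((fun i => ⟨σ i, hcomb i⟩), m), ?_⟩
      exact Subtype.ext hfm
  have hcombcard : Fintype.card {f : (Σ i : Fin ℓ, Fin (2 * π i + 1)) ≃
        Fin (∑ i, (2 * π i + 1)) // kindsCombLike π f} =
      (∏ i, Fintype.card {τ : Equiv.Perm (Fin (2 * π i + 1)) // combP (π i) τ}) * M := by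
    rw [← Fintype.card_of_bijective hΨbij, Fintype.card_prod, Fintype.card_pi]
  rw [hcombcard]
  calc (∏ i, Fintype.card {τ : Equiv.Perm (Fin (2 * π i + 1)) // combP (π i) τ}) * M *
        ∏ i, oddDoubleFactorial (π i)
      = (∏ i, (Fintype.card {τ : Equiv.Perm (Fin (2 * π i + 1)) // combP (π i) τ} *
          oddDoubleFactorial (π i))) * M := by
        rw [Finset.prod_mul_distrib]; ring
    _ = (∏ i, Nat.factorial (2 * π i + 1)) * M := by
        congr 1
        exact Finset.prod_congr rfl (fun i _ => comb_count (π i))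
    _ = Nat.factorial (∑ i, (2 * π i + 1)) := htotal

end Main


/-- for a partition `π` with `ℓ` parts, the number of permutations of the
multiset of `2π_i + 1` symbols of kind `i` (for each `i`) in which the symbols of each
kind appear in comb-like order equals `(2|π| + ℓ)! / ∏ i (2π_i + 1)!!`. -/
theorem number_of_arrangements_with_combs {ℓ : ℕ} (π : Fin ℓ → ℕ)
    (hπ : ∀ i, 0 < π i) :
    (Finset.univ.filter (kindsCombLike π)).card * ∏ i, oddDoubleFactorial (π i) =
      Nat.factorial (2 * (∑ i, π i) + ℓ) := by
  have h1 : (Finset.univ.filter (kindsCombLike π)).card =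
      Fintype.card {f : (Σ i : Fin ℓ, Fin (2 * π i + 1)) ≃ Fin (∑ i, (2 * π i + 1)) //
        kindsCombLike π f} := (Fintype.card_subtype _).symm
  have h2 : ∑ i, (2 * π i + 1) = 2 * (∑ i, π i) + ℓ := by
    rw [Finset.sum_add_distrib, ← Finset.mul_sum]
    simp
  rw [h1, ← h2]
  exact main_count π
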